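/- arXiv:1610.00641 — 2 statements merged into one kernel-verified Lean document; each statement's English description precedes it below -/
import Mathlib

section
/- Moments of the Kesten distribution: let V be a random variable with Lebesgue density p(x) = (2/π) Σ_{k∈ℕ₀} ((-1)^k/(2k+1)) exp(-(2k+1)²π²|x|/8), x ∈ ℝ. Then for every p > 0, E(|V|^p) = (4 Γ(p+1) 8^{p+1} / π^{2p+3}) · Σ_{k∈ℕ₀} (-1)^k/(2k+1)^{2p+3}, which is finite; in particular E(V^p) is finite for all p > 0, and E(V^m) = 0 for every odd integer m by the symmetry of p. -/
open MeasureTheory Real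

noncomputable section

/-- The density of the Kesten random variable `V`:
`p(x) = (2/π) ∑_{k≥0} ((-1)^k/(2k+1)) exp(-(2k+1)²π²|x|/8)`. -/
def kestenDensity (x : ℝ) : ℝ :=
  (2 / Real.pi) * ∑' k : ℕ,
    ((-1 : ℝ) ^ k / (2 * (k : ℝ) + 1)) *
      Real.exp (-(((2 * (k : ℝ) + 1) ^ 2 * Real.pi ^ 2) / 8) * |x|)

namespace KestenAux

/-- An even function integrable on `Ioi 0` is integrable on `ℝ` (composed with `abs`). -/
lemma integrable_comp_abs {f : ℝ → ℝ} (hf : IntegrableOn f (Set.Ioi 0)) :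
    Integrable (fun x : ℝ => f |x|) := by
  have hIoi : IntegrableOn (fun x : ℝ => f |x|) (Set.Ioi 0) :=
    hf.congr_fun (fun x hx => by rw [abs_of_pos hx]) measurableSet_Ioi
  have hIic : IntegrableOn (fun x : ℝ => f |x|) (Set.Iic 0) := by
    rw [← Measure.map_neg_eq_self (volume : Measure ℝ)]
    have m : MeasurableEmbedding fun x : ℝ => -x :=
      (Homeomorph.neg ℝ).measurableEmbedding
    rw [m.integrableOn_map_iff]
    simp_rw [Function.comp_def, abs_neg, Set.neg_preimage, Set.neg_Iic, neg_zero]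
    exact Iff.mpr integrableOn_Ici_iff_integrableOn_Ioi hIoi
  have := hIic.union hIoi
  rwa [Set.Iic_union_Ioi, integrableOn_univ] at this

/-- The basic moment integral: for `c > 0`, `p > 0`,
`∫ |x|^p e^{-c|x|} dx = 2 (1/c)^{p+1} Γ(p+1)`. -/
lemma key {p c : ℝ} (hp : 0 < p) (hc : 0 < c) :
    Integrable (fun x : ℝ => |x| ^ p * Real.exp (-c * |x|)) ∧
      ∫ x : ℝ, |x| ^ p * Real.exp (-c * |x|) =
        2 * ((1 / c) ^ (p + 1) * Real.Gamma (p + 1)) := by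
  have hIoi : IntegrableOn (fun x : ℝ => x ^ p * Real.exp (-c * x)) (Set.Ioi 0) := by
    have := integrableOn_rpow_mul_exp_neg_mul_rpow (s := p) (p := 1) (b := c)
      (by linarith) one_pos hc
    simpa [Real.rpow_one] using this
  refine ⟨integrable_comp_abs hIoi, ?_⟩
  have h0 : ∫ x : ℝ, |x| ^ p * Real.exp (-c * |x|)
      = 2 * ∫ x in Set.Ioi (0:ℝ), x ^ p * Real.exp (-c * x) :=
    integral_comp_abs (f := fun t => t ^ p * Real.exp (-c * t))
  have h1 := integral_rpow_mul_exp_neg_mul_Ioi (a := p + 1) (r := c) (by linarith) hc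
  simp only [add_sub_cancel_right] at h1
  simp only [neg_mul] at h0 ⊢
  rw [h0, h1]

/-- Integrability of a series of integrable functions with summable integrals of norms. -/
lemma integrable_tsum {F : ℕ → ℝ → ℝ} (hF_int : ∀ i, Integrable (F i))
    (hF_sum : Summable fun i => ∫ a, ‖F i a‖) :
    Integrable (fun x : ℝ => ∑' i, F i x) := by
  have hf'' : ∀ i, AEMeasurable (fun x : ℝ => (‖F i x‖₊ : ENNReal)) volume :=
    fun i => (hF_int i).1.aemeasurable.nnnorm.coe_nnreal_ennreal
  have hf' : ∑' i, ∫⁻ a, (‖F i a‖₊ : ENNReal) ≠ ⊤ := by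
    have h1 : ∀ i, ∫⁻ a, (‖F i a‖₊ : ENNReal) = ENNReal.ofReal (∫ a, ‖F i a‖) := by
      intro i
      exact (ofReal_integral_norm_eq_lintegral_enorm (hF_int i)).symm
    simp_rw [h1]
    rw [← ENNReal.ofReal_tsum_of_nonneg (fun i => integral_nonneg fun a => norm_nonneg _)
      hF_sum]
    exact ENNReal.ofReal_ne_top
  have hhh : ∀ᵐ a : ℝ, Summable fun n => ‖F n a‖ := by
    have hlt := ae_lt_top' (AEMeasurable.ennreal_tsum hf'')
      (by rwa [lintegral_tsum hf''])
    refine hlt.mono fun x hx => ?_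
    have := ENNReal.tsum_coe_ne_top_iff_summable_coe.mp hx.ne
    simpa [coe_nnnorm] using this
  have hmeas : AEStronglyMeasurable (fun x : ℝ => ∑' i, F i x) volume := by
    have htend : ∀ᵐ x : ℝ, Filter.Tendsto (fun n => ∑ i ∈ Finset.range n, F i x)
        Filter.atTop (nhds (∑' i, F i x)) :=
      hhh.mono fun x hx => hx.of_norm.hasSum.tendsto_sum_nat
    exact (aemeasurable_of_tendsto_metrizable_ae' (fun n =>
      (Finset.aemeasurable_fun_sum (Finset.range n) fun i _ => (hF_int i).1.aemeasurable))
      htend).aestronglyMeasurable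
  refine ⟨hmeas, ?_⟩
  have hle : ∫⁻ x, (‖∑' i, F i x‖₊ : ENNReal) ≤ ∑' i, ∫⁻ x, (‖F i x‖₊ : ENNReal) := by
    rw [← lintegral_tsum hf'']
    refine lintegral_mono_ae ?_
    filter_upwards [hhh] with x hx
    calc (‖∑' i, F i x‖₊ : ENNReal) = ENNReal.ofReal ‖∑' i, F i x‖ :=
          (ofReal_norm _).symm
      _ ≤ ENNReal.ofReal (∑' i, ‖F i x‖) :=
          ENNReal.ofReal_le_ofReal (norm_tsum_le_tsum_norm hx)
      _ = ∑' i, ENNReal.ofReal ‖F i x‖ :=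
          ENNReal.ofReal_tsum_of_nonneg (fun i => norm_nonneg _) hx
      _ = ∑' i, (‖F i x‖₊ : ENNReal) := by
          simp_rw [ofReal_norm, enorm_eq_nnnorm]
  exact lt_of_le_of_lt hle hf'.lt_top

end KestenAux

/-- **Moments of the Kesten distribution.** For every `p > 0`,
`E(|V|^p) = (4 Γ(p+1) 8^{p+1} / π^{2p+3}) ∑_{k≥0} (-1)^k/(2k+1)^{2p+3} < ∞`,
and all odd moments of `V` vanish by symmetry. -/
theorem kesten_moments :
    (∀ p : ℝ, 0 < p →
      Integrable (fun x : ℝ => |x| ^ p * kestenDensity x) ∧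
      ∫ x : ℝ, |x| ^ p * kestenDensity x =
        (4 * Real.Gamma (p + 1) * (8 : ℝ) ^ (p + 1) / Real.pi ^ (2 * p + 3)) *
          ∑' k : ℕ, (-1 : ℝ) ^ k / (2 * (k : ℝ) + 1) ^ (2 * p + 3)) ∧
    (∀ m : ℕ, Odd m → ∫ x : ℝ, x ^ m * kestenDensity x = 0) := by
  constructor
  · intro p hp
    set Γ := Real.Gamma (p + 1) with hΓdef
    have hΓpos : 0 < Γ := Real.Gamma_pos_of_pos (by linarith)
    -- abbreviations
    set F : ℕ → ℝ → ℝ := fun k x =>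
      ((2 / Real.pi) * ((-1 : ℝ) ^ k / (2 * (k : ℝ) + 1))) *
        (|x| ^ p * Real.exp (-(((2 * (k : ℝ) + 1) ^ 2 * Real.pi ^ 2) / 8) * |x|)) with hFdef
    have hu : ∀ k : ℕ, (0:ℝ) < 2 * (k : ℝ) + 1 := fun k => by positivity
    have hc : ∀ k : ℕ, (0:ℝ) < ((2 * (k : ℝ) + 1) ^ 2 * Real.pi ^ 2) / 8 := fun k => by
      have := Real.pi_pos; positivity
    -- pointwise identity
    have hpt : ∀ x : ℝ, |x| ^ p * kestenDensity x = ∑' k, F k x := by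
      intro x
      rw [kestenDensity, show |x| ^ p * ((2 / Real.pi) * ∑' k : ℕ,
        ((-1 : ℝ) ^ k / (2 * (k : ℝ) + 1)) *
          Real.exp (-(((2 * (k : ℝ) + 1) ^ 2 * Real.pi ^ 2) / 8) * |x|))
        = (|x| ^ p * (2 / Real.pi)) * ∑' k : ℕ,
        ((-1 : ℝ) ^ k / (2 * (k : ℝ) + 1)) *
          Real.exp (-(((2 * (k : ℝ) + 1) ^ 2 * Real.pi ^ 2) / 8) * |x|) by ring,
        ← tsum_mul_left]
      exact tsum_congr fun k => by rw [hFdef]; ring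
    -- integrability and integral of each term
    have hkey := fun k : ℕ => KestenAux.key hp (hc k)
    have hFint : ∀ k, Integrable (F k) := fun k => ((hkey k).1).const_mul _
    -- the integral of the norm of each term
    have hnormint : ∀ k : ℕ, ∫ a, ‖F k a‖ =
        |(2 / Real.pi) * ((-1 : ℝ) ^ k / (2 * (k : ℝ) + 1))| *
          (2 * ((1 / (((2 * (k : ℝ) + 1) ^ 2 * Real.pi ^ 2) / 8)) ^ (p + 1) * Γ)) := by
      intro k
      have : ∀ a : ℝ, ‖F k a‖ =
          |(2 / Real.pi) * ((-1 : ℝ) ^ k / (2 * (k : ℝ) + 1))| *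
            (|a| ^ p * Real.exp (-(((2 * (k : ℝ) + 1) ^ 2 * Real.pi ^ 2) / 8) * |a|)) := by
        intro a
        rw [hFdef]
        rw [Real.norm_eq_abs, abs_mul, abs_of_nonneg (show (0:ℝ) ≤
          |a| ^ p * Real.exp (-(((2 * (k : ℝ) + 1) ^ 2 * Real.pi ^ 2) / 8) * |a|) from
          mul_nonneg (Real.rpow_nonneg (abs_nonneg a) p) (Real.exp_nonneg _))]
      simp_rw [this]
      rw [integral_const_mul, (hkey k).2]
    -- summability of the integrals of norms
    have hsum : Summable fun k => ∫ a, ‖F k a‖ := by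
      have hπ := Real.pi_gt_three
      have hbound : ∀ k : ℕ, ∫ a, ‖F k a‖ ≤ (2 * Γ) * (1 / ((k : ℝ) + 1) ^ 2) := by
        intro k
        rw [hnormint k]
        have hu1 : (1:ℝ) ≤ 2 * (k : ℝ) + 1 := by
          have : (0:ℝ) ≤ (k:ℝ) := Nat.cast_nonneg k
          linarith
        have hk1 : ((k:ℝ) + 1) ≤ 2 * (k : ℝ) + 1 := by
          have : (0:ℝ) ≤ (k:ℝ) := Nat.cast_nonneg k
          linarith
        have hk1pos : (0:ℝ) < (k:ℝ) + 1 := by positivity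
        -- bound on the constant
        have habs : |(2 / Real.pi) * ((-1 : ℝ) ^ k / (2 * (k : ℝ) + 1))| ≤
            1 / ((k : ℝ) + 1) := by
          rw [abs_mul, abs_div, abs_div, abs_pow, abs_neg, abs_one, one_pow]
          rw [abs_of_nonneg (by norm_num : (0:ℝ) ≤ 2), abs_of_nonneg Real.pi_pos.le,
            abs_of_nonneg (hu k).le]
          have h1 : 2 / Real.pi ≤ 1 := by
            rw [div_le_one Real.pi_pos]
            linarith
          have h2 : 1 / (2 * (k : ℝ) + 1) ≤ 1 / ((k:ℝ) + 1) :=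
            one_div_le_one_div_of_le hk1pos hk1
          calc 2 / Real.pi * (1 / (2 * (k : ℝ) + 1)) ≤ 1 * (1 / ((k:ℝ)+1)) := by
                apply mul_le_mul h1 h2 (by positivity) (by norm_num)
            _ = 1 / ((k:ℝ)+1) := one_mul _
        -- bound on the rpow factor
        have hbase_pos : (0:ℝ) < 1 / (((2 * (k : ℝ) + 1) ^ 2 * Real.pi ^ 2) / 8) :=
          by positivity
        have hbase_le : 1 / (((2 * (k : ℝ) + 1) ^ 2 * Real.pi ^ 2) / 8) ≤ 1 := by
          rw [div_le_one (hc k)]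
          have h8 : (8:ℝ) ≤ Real.pi ^ 2 := by nlinarith
          nlinarith [sq_nonneg (2 * (k:ℝ) + 1), hu1]
        have hrpow : (1 / (((2 * (k : ℝ) + 1) ^ 2 * Real.pi ^ 2) / 8)) ^ (p + 1) ≤
            1 / (((k : ℝ) + 1)) := by
          calc (1 / (((2 * (k : ℝ) + 1) ^ 2 * Real.pi ^ 2) / 8)) ^ (p + 1)
              ≤ (1 / (((2 * (k : ℝ) + 1) ^ 2 * Real.pi ^ 2) / 8)) ^ (1:ℝ) :=
                Real.rpow_le_rpow_of_exponent_ge hbase_pos hbase_le (by linarith)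
            _ = 1 / (((2 * (k : ℝ) + 1) ^ 2 * Real.pi ^ 2) / 8) := Real.rpow_one _
            _ ≤ 1 / (((k : ℝ) + 1)) := by
                apply one_div_le_one_div_of_le hk1pos
                have h8 : (8:ℝ) ≤ Real.pi ^ 2 := by nlinarith
                nlinarith [mul_le_mul_of_nonneg_left h8 (sq_nonneg (2 * (k:ℝ) + 1)),
                  sq_nonneg ((k:ℝ)), Nat.cast_nonneg (α := ℝ) k]
        have hn1 : (0:ℝ) ≤ (1 / (((2 * (k : ℝ) + 1) ^ 2 * Real.pi ^ 2) / 8)) ^ (p + 1) :=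
          (Real.rpow_pos_of_pos hbase_pos _).le
        calc |(2 / Real.pi) * ((-1 : ℝ) ^ k / (2 * (k : ℝ) + 1))| *
              (2 * ((1 / (((2 * (k : ℝ) + 1) ^ 2 * Real.pi ^ 2) / 8)) ^ (p + 1) * Γ))
            ≤ (1 / ((k : ℝ) + 1)) * (2 * ((1 / ((k : ℝ) + 1)) * Γ)) := by
              apply mul_le_mul habs _ (by positivity) (by positivity)
              apply mul_le_mul_of_nonneg_left _ (by norm_num)
              exact mul_le_mul_of_nonneg_right hrpow hΓpos.le
          _ = (2 * Γ) * (1 / ((k : ℝ) + 1) ^ 2) := by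
              field_simp
      have hgsum : Summable fun k : ℕ => (2 * Γ) * (1 / ((k : ℝ) + 1) ^ 2) := by
        apply Summable.mul_left
        have h0 : Summable fun n : ℕ => 1 / (n : ℝ) ^ 2 :=
          Real.summable_one_div_nat_pow.mpr one_lt_two
        have := (summable_nat_add_iff 1).mpr h0
        simpa using this
      exact Summable.of_nonneg_of_le
        (fun k => integral_nonneg fun a => norm_nonneg _) hbound hgsum
    -- integrability
    have hint : Integrable (fun x : ℝ => |x| ^ p * kestenDensity x) := by
      have := KestenAux.integrable_tsum hFint hsum
      exact this.congr (Filter.Eventually.of_forall fun x => (hpt x).symm)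
    refine ⟨hint, ?_⟩
    -- the integral
    have hI : ∫ x : ℝ, |x| ^ p * kestenDensity x = ∑' k, ∫ x, F k x := by
      simp_rw [hpt]
      exact (integral_tsum_of_summable_integral_norm hFint hsum).symm
    rw [hI]
    -- per-term computation
    have hperterm : ∀ k : ℕ, ∫ x, F k x =
        ((-1 : ℝ) ^ k / (2 * (k : ℝ) + 1) ^ (2 * p + 3)) *
          (4 * Γ * (8 : ℝ) ^ (p + 1) / Real.pi ^ (2 * p + 3)) := by
      intro k
      rw [hFdef]
      rw [integral_const_mul, (hkey k).2]
      set u : ℝ := 2 * (k : ℝ) + 1 with hudef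
      have hupos : (0:ℝ) < u := hu k
      have hπ := Real.pi_pos
      have h1 : (1 / ((u ^ 2 * Real.pi ^ 2) / 8)) ^ (p + 1) =
          (8:ℝ) ^ (p + 1) / (u ^ (2 * p + 2) * Real.pi ^ (2 * p + 2)) := by
        rw [show (1:ℝ) / ((u ^ 2 * Real.pi ^ 2) / 8) = 8 / (u ^ 2 * Real.pi ^ 2) by
          field_simp]
        rw [Real.div_rpow (by norm_num) (by positivity),
          Real.mul_rpow (by positivity) (by positivity),
          ← Real.rpow_natCast u 2, ← Real.rpow_natCast Real.pi 2,
          ← Real.rpow_mul hupos.le, ← Real.rpow_mul hπ.le]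
        norm_num
        rw [show (2:ℝ) * (p + 1) = 2 * p + 2 by ring]
      have h2 : u ^ (2 * p + 3) = u ^ (2 * p + 2) * u := by
        rw [show (2:ℝ) * p + 3 = (2 * p + 2) + 1 by ring, Real.rpow_add hupos,
          Real.rpow_one]
      have h3 : Real.pi ^ (2 * p + 3) = Real.pi ^ (2 * p + 2) * Real.pi := by
        rw [show (2:ℝ) * p + 3 = (2 * p + 2) + 1 by ring, Real.rpow_add hπ,
          Real.rpow_one]
      rw [h1, h2, h3]
      have hune : u ^ (2 * p + 2) ≠ 0 := (Real.rpow_pos_of_pos hupos _).ne'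
      have hπne : Real.pi ^ (2 * p + 2) ≠ 0 := (Real.rpow_pos_of_pos hπ _).ne'
      field_simp
      ring
    simp_rw [hperterm]
    rw [tsum_mul_right, mul_comm]
  · -- odd moments vanish
    intro m hm
    have hsymm : ∀ x : ℝ, kestenDensity (-x) = kestenDensity x := by
      intro x; simp [kestenDensity, abs_neg]
    have hodd : ∀ x : ℝ, ((-x) ^ m * kestenDensity (-x)) = -(x ^ m * kestenDensity x) := by
      intro x
      rw [hsymm, hm.neg_pow, neg_mul]
    have h := integral_neg_eq_self (fun x : ℝ => x ^ m * kestenDensity x) volume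
    simp_rw [hodd] at h
    rw [integral_neg] at h
    linarith

end
end

section
/- Maximal resampling gap is o(√n): let τ: ℕ₀ → ℕ₀ be strictly increasing with τ(0) = 0 and τ(k) ≥ k, set T_k = τ(k) - τ(k-1), k(n) = max{k ∈ ℕ : τ(k) ≤ n}, and T̄^n = n - τ(k(n)). If T̄^n = o(√n) as n → ∞, then max_{1 ≤ k ≤ k(n)} T_k = o(√n) as n → ∞. -/
open Filter Topology Asymptotics

noncomputable section

/-- `epoch τ n = k(n)` is the index of the last resampling time `τ(k) ≤ n`. -/
def epoch (τ : ℕ → ℕ) (n : ℕ) : ℕ :=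
  Nat.findGreatest (fun k => τ k ≤ n) n

lemma sqrt_nat_tendsto : Filter.Tendsto (fun n : ℕ => Real.sqrt n) atTop atTop := by
  apply Filter.tendsto_atTop_atTop.2
  intro b
  refine ⟨⌈b ^ 2⌉₊, fun n hn => ?_⟩
  have hb : (b : ℝ) ^ 2 ≤ n := le_trans (Nat.le_ceil _) (by exact_mod_cast hn)
  calc b ≤ |b| := le_abs_self b
    _ = Real.sqrt (b ^ 2) := (Real.sqrt_sq_eq_abs b).symm
    _ ≤ Real.sqrt n := Real.sqrt_le_sqrt hb

/-- Running maximum of a little-o(√n) sequence of naturals is little-o(√n). -/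
lemma running_max_little_o (r : ℕ → ℕ)
    (h : (fun n : ℕ => (r n : ℝ)) =o[atTop] fun n : ℕ => Real.sqrt n) :
    (fun n : ℕ => (((Finset.range (n + 1)).sup r : ℕ) : ℝ)) =o[atTop]
      fun n : ℕ => Real.sqrt n := by
  rw [isLittleO_iff]
  intro ε hε
  obtain ⟨N, hN⟩ := eventually_atTop.1 (isLittleO_iff.1 h hε)
  set C : ℕ := (Finset.range N).sup r with hC
  have hCε : ∀ᶠ n : ℕ in atTop, (C : ℝ) ≤ ε * Real.sqrt n := by
    have : Tendsto (fun n : ℕ => ε * Real.sqrt n) atTop atTop := by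
      apply Tendsto.const_mul_atTop hε
      exact sqrt_nat_tendsto
    exact this.eventually_ge_atTop _
  filter_upwards [hCε, eventually_ge_atTop N] with n hn hnN
  obtain ⟨m, hm, hms⟩ := Finset.exists_mem_eq_sup (Finset.range (n + 1))
    ⟨0, Finset.mem_range.2 (Nat.succ_pos n)⟩ r
  rw [hms]
  have hmn : m ≤ n := Nat.lt_succ_iff.1 (Finset.mem_range.1 hm)
  rw [Real.norm_eq_abs, Real.norm_eq_abs, abs_of_nonneg (Nat.cast_nonneg _),
    abs_of_nonneg (Real.sqrt_nonneg _)]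
  rcases lt_or_ge m N with hmN | hmN
  · calc (r m : ℝ) ≤ C := by
          exact_mod_cast Finset.le_sup (Finset.mem_range.2 hmN)
      _ ≤ ε * Real.sqrt n := hn
  · calc (r m : ℝ) ≤ ε * Real.sqrt m := by
          have := hN m hmN
          rwa [Real.norm_eq_abs, Real.norm_eq_abs, abs_of_nonneg (Nat.cast_nonneg _),
            abs_of_nonneg (Real.sqrt_nonneg _)] at this
      _ ≤ ε * Real.sqrt n := by
          apply mul_le_mul_of_nonneg_left _ hε.le
          exact Real.sqrt_le_sqrt (by exact_mod_cast hmn)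

/-- **The maximal resampling gap is `o(√n)`.** If the remainder after the last
resampling satisfies `T̄ⁿ = n - τ(k(n)) = o(√n)`, then the maximal increment
`max_{1 ≤ k ≤ k(n)} T_k` of the resampling times prior to time `n` is also
`o(√n)`. -/
theorem max_gap_little_o (τ : ℕ → ℕ) (hmono : StrictMono τ) (hτ0 : τ 0 = 0)
    (hτk : ∀ k, k ≤ τ k)
    (hrem : (fun n : ℕ => ((n - τ (epoch τ n) : ℕ) : ℝ)) =o[atTop]
      fun n : ℕ => Real.sqrt n) :
    (fun n : ℕ => ((((Finset.Icc 1 (epoch τ n)).sup fun k => τ k - τ (k - 1) : ℕ)) : ℝ))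
      =o[atTop] fun n : ℕ => Real.sqrt n := by
  set r : ℕ → ℕ := fun n => n - τ (epoch τ n) with hr
  -- key: for 1 ≤ k ≤ epoch τ n, the gap τ k - τ (k-1) equals r (τ k - 1) + 1
  have key : ∀ n, ∀ k ∈ Finset.Icc 1 (epoch τ n),
      τ k - τ (k - 1) ≤ (Finset.range (n + 1)).sup r + 1 := by
    intro n k hk
    obtain ⟨hk1, hk2⟩ := Finset.mem_Icc.1 hk
    have hτkn : τ k ≤ n := by
      have hspec : τ (epoch τ n) ≤ n :=
        Nat.findGreatest_spec (P := fun k => τ k ≤ n) (Nat.zero_le n) (by simp [hτ0])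
      exact le_trans (hmono.monotone hk2) hspec
    have hτk1 : 1 ≤ τ k := le_trans hk1 (hτk k)
    set m : ℕ := τ k - 1 with hm
    have hmlt : m < τ k := Nat.sub_lt hτk1 one_pos
    have hτk1m : τ (k - 1) ≤ m := by
      have : τ (k - 1) < τ k := hmono (Nat.sub_lt hk1 one_pos)
      omega
    have hepoch : epoch τ m = k - 1 := by
      apply Nat.findGreatest_eq_iff.2
      refine ⟨le_trans (hτk (k - 1)) hτk1m, fun _ => hτk1m, ?_⟩
      intro j hj hjm hτj
      have : τ k ≤ τ j := hmono.monotone (by omega)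
      omega
    have hrm : r m = τ k - 1 - τ (k - 1) := by show m - τ (epoch τ m) = _; rw [hepoch, hm]
    have hmem : m ∈ Finset.range (n + 1) := Finset.mem_range.2 (by omega)
    have := Finset.le_sup (f := r) hmem
    omega
  have hle : ∀ n, ((Finset.Icc 1 (epoch τ n)).sup fun k => τ k - τ (k - 1)) ≤
      (Finset.range (n + 1)).sup r + 1 := fun n => Finset.sup_le (key n)
  have hbig : (fun n : ℕ => ((((Finset.Icc 1 (epoch τ n)).sup fun k => τ k - τ (k - 1) : ℕ)) : ℝ))
      =O[atTop] fun n : ℕ => (((Finset.range (n + 1)).sup r : ℕ) : ℝ) + 1 := by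
    rw [isBigO_iff]
    refine ⟨1, Eventually.of_forall fun n => ?_⟩
    rw [one_mul, Real.norm_eq_abs, Real.norm_eq_abs, abs_of_nonneg (Nat.cast_nonneg _),
      abs_of_nonneg (by positivity)]
    exact_mod_cast hle n
  have hlo : (fun n : ℕ => (((Finset.range (n + 1)).sup r : ℕ) : ℝ) + 1) =o[atTop]
      fun n : ℕ => Real.sqrt n := by
    apply (running_max_little_o r hrem).add
    exact isLittleO_const_left.2 (Or.inr (by simpa [Function.comp_def, Real.norm_eq_abs] using tendsto_abs_atTop_atTop.comp sqrt_nat_tendsto))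
  exact hbig.trans_isLittleO hlo

end
end
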